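/- Let f : 𝔽₂^n → 𝔽₂ be a Boolean function with nonquadraticity χ(f). Then there exists a pure n-qubit stabilizer state φ with |⟨φ|Ψ_f⟩|² ≥ (1 − 2^{1−n}χ(f))². Consequently, if χ(f) < 2^{n−1}, then 𝔇_min(Ψ_f) ≤ −2 log₂(1 − 2^{1−n}χ(f)). -/

import Mathlib

open scoped ComplexOrder

namespace Magic

abbrev QIdx (n : ℕ) := Fin n → ZMod 2
abbrev QVec (n : ℕ) := QIdx n → ℂ
abbrev QMat (n : ℕ) := Matrix (QIdx n) (QIdx n) ℂ

/-- The four single-qubit Pauli matrices `I, X, Y, Z`. -/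
noncomputable def pauli1 (k : Fin 4) : Matrix (ZMod 2) (ZMod 2) ℂ :=
  Matrix.of fun i j =>
    if k = 0 then (if i = j then 1 else 0)
    else if k = 1 then (if i = j then 0 else 1)
    else if k = 2 then
      (if i = 0 ∧ j = 1 then -Complex.I else if i = 1 ∧ j = 0 then Complex.I else 0)
    else (if i = j then (if i = 0 then 1 else -1) else 0)

/-- Tensor product `σ_1 ⊗ ⋯ ⊗ σ_n` of single-qubit Pauli matrices. -/
noncomputable def pauliOp {n : ℕ} (σ : Fin n → Fin 4) : QMat n :=
  Matrix.of fun x y => ∏ k, pauli1 (σ k) (x k) (y k)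

/-- The `n`-qubit Pauli group: operators `i^a · (σ_1 ⊗ ⋯ ⊗ σ_n)`. -/
def PauliGroup (n : ℕ) : Set (QMat n) :=
  { M | ∃ (a : Fin 4) (σ : Fin n → Fin 4), M = Complex.I ^ (a : ℕ) • pauliOp σ }

/-- `G` is an abelian subgroup of the `n`-qubit Pauli group of order `2^n`
not containing `-I`. -/
structure IsStabGroup {n : ℕ} (G : Finset (QMat n)) : Prop where
  subset : ↑G ⊆ PauliGroup n
  one_mem : (1 : QMat n) ∈ G
  mul_mem : ∀ A ∈ G, ∀ B ∈ G, A * B ∈ G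
  comm : ∀ A ∈ G, ∀ B ∈ G, A * B = B * A
  card_eq : G.card = 2 ^ n
  neg_one_not_mem : (-1 : QMat n) ∉ G

/-- A pure `n`-qubit stabilizer state: a unit vector which is a common
`+1`-eigenvector of an abelian subgroup of the Pauli group of order `2^n`
not containing `-I`. -/
def IsStabState {n : ℕ} (v : QVec n) : Prop :=
  (∑ x, Complex.normSq (v x)) = 1 ∧
  ∃ G : Finset (QMat n), IsStabGroup G ∧ ∀ A ∈ G, A.mulVec v = v

/-- The rank-one projector `|v⟩⟨v|`. -/
noncomputable def stabProj {n : ℕ} (v : QVec n) : QMat n :=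
  Matrix.vecMulVec v (star v)

/-- `STAB`: the convex hull of the rank-one projectors onto pure stabilizer states. -/
noncomputable def STAB (n : ℕ) : Set (QMat n) :=
  convexHull ℝ { P | ∃ v : QVec n, IsStabState v ∧ P = stabProj v }

/-- A density matrix: positive semidefinite with unit trace. -/
def IsDensityMatrix {n : ℕ} (ρ : QMat n) : Prop :=
  ρ.PosSemidef ∧ ρ.trace = 1

/-- The set of squared overlaps of `ψ` with pure stabilizer states. -/
noncomputable def stabOverlapSet {n : ℕ} (ψ : QVec n) : Set ℝ :=
  { t | ∃ φ : QVec n, IsStabState φ ∧ t = ‖∑ x, (starRingEnd ℂ) (φ x) * ψ x‖ ^ 2 }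

/-- Min-relative entropy of magic of a pure state:
`𝔇_min(ψ) = −log₂ max_φ |⟨φ|ψ⟩|²`, maximum over pure stabilizer states. -/
noncomputable def DminPure {n : ℕ} (ψ : QVec n) : ℝ :=
  - Real.logb 2 (sSup (stabOverlapSet ψ))

/-- Free robustness of magic. -/
noncomputable def Rfree {n : ℕ} (ρ : QMat n) : ℝ :=
  sInf { s : ℝ | 0 ≤ s ∧ ∃ σ ∈ STAB n, ∃ σ' ∈ STAB n, ρ = (1 + s) • σ - s • σ' }

/-- Log-free robustness of magic. -/
noncomputable def LRmagic {n : ℕ} (ρ : QMat n) : ℝ :=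
  Real.logb 2 (1 + Rfree ρ)

/-- Boolean functions on `𝔽₂^n`. -/
abbrev BF (n : ℕ) := QIdx n → ZMod 2

/-- The hypergraph state `|Ψ_f⟩ = 2^{−n/2} ∑_x (−1)^{f(x)} |x⟩`. -/
noncomputable def hstate {n : ℕ} (f : BF n) : QVec n :=
  fun x => (Complex.ofReal (Real.sqrt ((2 : ℝ) ^ n)))⁻¹ * (-1 : ℂ) ^ ((f x).val)

/-- The Hamming weight of a Boolean function. -/
def wt {n : ℕ} (f : BF n) : ℕ := (Finset.univ.filter fun x => f x = 1).card

/-- A Boolean function of algebraic degree at most 2: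
`q(x) = ∑_{i<j} a_{ij} x_i x_j + ∑_i b_i x_i + c` over `𝔽₂`. -/
def IsQuadratic {n : ℕ} (q : BF n) : Prop :=
  ∃ (a : Fin n → Fin n → ZMod 2) (b : Fin n → ZMod 2) (c : ZMod 2),
    ∀ x, q x = (∑ i, ∑ j, if i < j then a i j * x i * x j else 0)
      + (∑ i, b i * x i) + c

/-- The nonquadraticity (second-order nonlinearity) of a Boolean function:
`χ(f) = min { wt(f+q) : q quadratic }`. -/
noncomputable def nonquad {n : ℕ} (f : BF n) : ℕ :=
  sInf { w : ℕ | ∃ q : BF n, IsQuadratic q ∧ w = wt (fun x => f x + q x) }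


/-! ### Auxiliary machinery -/

section Aux

lemma chi_add (u v : ZMod 2) : ((-1:ℂ))^((u+v).val) = (-1)^u.val * (-1)^v.val := by
  rcases (show ∀ u : ZMod 2, u = 0 ∨ u = 1 from by decide) u with rfl | rfl <;>
    rcases (show ∀ u : ZMod 2, u = 0 ∨ u = 1 from by decide) v with rfl | rfl <;>
    norm_num [show ((2:ZMod 2)).val = 0 from rfl, show ((1:ZMod 2)).val = 1 from rfl,
      show ((1:ZMod 2)+1).val = 0 from rfl, show ((0:ZMod 2)+1).val = 1 from rfl,
      show ((1:ZMod 2)+0).val = 1 from rfl, show ((0:ZMod 2)+0).val = 0 from rfl,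
      show ((0:ZMod 2)).val = 0 from rfl]

lemma chi_mid (u v w : ZMod 2) :
    ((-1:ℂ))^((u+v).val) * (-1)^((v+w).val) = (-1)^((u+w).val) := by
  rcases (show ∀ u : ZMod 2, u = 0 ∨ u = 1 from by decide) u with rfl | rfl <;>
    rcases (show ∀ u : ZMod 2, u = 0 ∨ u = 1 from by decide) v with rfl | rfl <;>
    rcases (show ∀ u : ZMod 2, u = 0 ∨ u = 1 from by decide) w with rfl | rfl <;>
    norm_num [show ((2:ZMod 2)).val = 0 from rfl, show ((1:ZMod 2)).val = 1 from rfl,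
      show ((0:ZMod 2)).val = 0 from rfl,
      show ((1:ZMod 2)+1).val = 0 from rfl, show ((0:ZMod 2)+1).val = 1 from rfl,
      show ((1:ZMod 2)+0).val = 1 from rfl, show ((0:ZMod 2)+0).val = 0 from rfl]

lemma chi_cancel (u v : ZMod 2) : ((-1:ℂ))^((u+v).val) * (-1)^(v.val) = (-1)^(u.val) := by
  have := chi_mid u v 0
  simpa using this

lemma chi_sum {ι : Type*} (S : Finset ι) (g : ι → ZMod 2) :
    ∏ k ∈ S, ((-1:ℂ))^((g k).val) = (-1)^((∑ k ∈ S, g k).val) := by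
  classical
  induction S using Finset.induction with
  | empty => simp
  | insert a s h ih => simp [Finset.prod_insert h, Finset.sum_insert h, ih, chi_add]

/-- The stabilizer generators `U X(s) U` as explicit matrices. -/
noncomputable def Kop {n : ℕ} (q : QIdx n → ZMod 2) (s : QIdx n) : QMat n :=
  Matrix.of fun x y => if y = x + s then ((-1:ℂ))^((q x + q y).val) else 0

lemma Kop_zero {n : ℕ} (q : QIdx n → ZMod 2) : Kop q 0 = 1 := by
  ext x y
  simp only [Kop, Matrix.of_apply, add_zero, Matrix.one_apply]
  by_cases h : y = x
  · subst h; simp [show q y + q y = 0 from by simp [CharTwo.add_self_eq_zero]]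
  · simp [h, Ne.symm h]

lemma Kop_mul {n : ℕ} (q : QIdx n → ZMod 2) (s t : QIdx n) :
    Kop q s * Kop q t = Kop q (s + t) := by
  ext x y
  simp only [Matrix.mul_apply, Kop, Matrix.of_apply]
  rw [Finset.sum_eq_single (x + s)]
  · by_cases h : y = x + (s + t)
    · have h2 : y = (x + s) + t := by rw [h]; abel
      have h3 : x + s + t = x + (s+t) := by abel
      simp only [if_pos rfl, if_pos h2, if_pos h, h2, if_true]
      rw [h3, chi_mid, if_pos rfl]
    · have h2 : ¬ (y = (x + s) + t) := by intro hc; apply h; rw [hc]; abel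
      simp [h, h2]
  · intro b _ hb
    simp [hb]
  · simp

lemma Kop_injective {n : ℕ} (q : QIdx n → ZMod 2) : Function.Injective (Kop q) := by
  intro s t h
  have h0 : Kop q s 0 s = Kop q t 0 s := by rw [h]
  simp only [Kop, Matrix.of_apply, zero_add] at h0
  rw [if_pos trivial] at h0
  by_cases hst : s = t
  · exact hst
  · rw [if_neg hst] at h0
    exact absurd h0 (pow_ne_zero _ (by norm_num))

/-- coefficient of `x k` in `q(x)+q(x+s)` -/
def cvec {n : ℕ} (a : Fin n → Fin n → ZMod 2) (s : QIdx n) (k : Fin n) : ZMod 2 :=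
  (∑ i, if i < k then a i k * s i else 0) + (∑ j, if k < j then a k j * s j else 0)

lemma quad_diff {n : ℕ} (a : Fin n → Fin n → ZMod 2) (b : Fin n → ZMod 2) (c : ZMod 2)
    (q : QIdx n → ZMod 2)
    (hq : ∀ x, q x = (∑ i, ∑ j, if i < j then a i j * x i * x j else 0)
      + (∑ i, b i * x i) + c) (s x : QIdx n) :
    q x + q (x + s) = (∑ k, cvec a s k * x k) + (q 0 + q s) := by
  set Q : QIdx n → ZMod 2 := fun x => ∑ i, ∑ j, if i < j then a i j * x i * x j else 0 with hQ
  set L : QIdx n → ZMod 2 := fun x => ∑ i, b i * x i with hL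
  have hQ0 : Q 0 = 0 := by simp [hQ]
  have hL0 : L 0 = 0 := by simp [hL]
  have hLadd : L (x + s) = L x + L s := by
    simp only [hL, Pi.add_apply, mul_add, Finset.sum_add_distrib]
  have hT1 : (∑ i, ∑ j, if i < j then a i j * x i * s j else 0)
      = ∑ k, (∑ j, if k < j then a k j * s j else 0) * x k := by
    refine Finset.sum_congr rfl fun i _ => ?_
    rw [Finset.sum_mul]
    refine Finset.sum_congr rfl fun j _ => ?_
    split_ifs <;> ring
  have hT2 : (∑ i, ∑ j, if i < j then a i j * s i * x j else 0)
      = ∑ k, (∑ i, if i < k then a i k * s i else 0) * x k := by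
    rw [Finset.sum_comm]
    refine Finset.sum_congr rfl fun j _ => ?_
    rw [Finset.sum_mul]
    refine Finset.sum_congr rfl fun i _ => ?_
    split_ifs <;> ring
  have hQadd : Q (x + s) = Q x + ((∑ k, cvec a s k * x k) + Q s) := by
    have expand : Q (x + s) = Q x
        + ((∑ i, ∑ j, if i < j then a i j * x i * s j else 0)
          + (∑ i, ∑ j, if i < j then a i j * s i * x j else 0)) + Q s := by
      simp only [hQ, Pi.add_apply, ← Finset.sum_add_distrib]
      refine Finset.sum_congr rfl fun i _ => Finset.sum_congr rfl fun j _ => ?_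
      split_ifs <;> ring
    rw [expand, hT1, hT2, ← Finset.sum_add_distrib]
    have : (∑ k, cvec a s k * x k)
        = ∑ k, ((∑ j, if k < j then a k j * s j else 0) * x k
            + (∑ i, if i < k then a i k * s i else 0) * x k) := by
      refine Finset.sum_congr rfl fun k _ => ?_
      rw [cvec, add_mul]; ring
    rw [this]; abel
  have hq' : ∀ y, q y = Q y + L y + c := fun y => hq y
  have key : ∀ (u v w z t r : ZMod 2),
      (u + v + w) + ((u + (z + t)) + ((v + r) + w)) = z + ((0 + 0 + w) + ((t + r) + w)) := by
    decide
  calc q x + q (x + s)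
      = (Q x + L x + c) + ((Q x + ((∑ k, cvec a s k * x k) + Q s)) + ((L x + L s) + c)) := by
        rw [hq' x, hq' (x+s), hQadd, hLadd]; ring
    _ = (∑ k, cvec a s k * x k) + ((0 + 0 + c) + ((Q s + L s) + c)) :=
        key (Q x) (L x) c (∑ k, cvec a s k * x k) (Q s) (L s)
    _ = (∑ k, cvec a s k * x k) + (q 0 + q s) := by rw [hq' 0, hq' s, hQ0, hL0]

def sig1 (s c : ZMod 2) : Fin 4 :=
  if s = 0 then (if c = 0 then 0 else 3) else (if c = 0 then 1 else 2)

lemma pauli1_sig1 (sk ck xk yk : ZMod 2) :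
    pauli1 (sig1 sk ck) xk yk
      = (if yk = xk + sk then 1 else 0) * ((-Complex.I)^(sk.val * ck.val)
          * (-1:ℂ)^((ck * xk).val)) := by
  rcases (show ∀ u : ZMod 2, u = 0 ∨ u = 1 from by decide) sk with rfl | rfl <;>
    rcases (show ∀ u : ZMod 2, u = 0 ∨ u = 1 from by decide) ck with rfl | rfl <;>
    rcases (show ∀ u : ZMod 2, u = 0 ∨ u = 1 from by decide) xk with rfl | rfl <;>
    rcases (show ∀ u : ZMod 2, u = 0 ∨ u = 1 from by decide) yk with rfl | rfl <;>
    simp [sig1, pauli1, show ((1:ZMod 2)+1) = 0 from by decide,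
      show ((1:ZMod 2)).val = 1 from rfl, show ((0:ZMod 2)).val = 0 from rfl]

lemma I_pow_mod (N : ℕ) : Complex.I ^ (N % 4) = Complex.I ^ N := by
  conv_rhs => rw [← Nat.div_add_mod N 4]
  rw [pow_add, pow_mul, Complex.I_pow_four, one_pow, one_mul]

/-- Key entry formula for a tensor product of Paulis determined by `s` and `c`. -/
lemma pauliOp_entry {n : ℕ} (s c : QIdx n) (x y : QIdx n) :
    pauliOp (fun k => sig1 (s k) (c k)) x y
      = (if y = x + s then 1 else 0) * ((-Complex.I)^(∑ k, (s k).val * (c k).val)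
          * (-1:ℂ)^((∑ k, c k * x k).val)) := by
  simp only [pauliOp, Matrix.of_apply, pauli1_sig1]
  rw [Finset.prod_mul_distrib, Finset.prod_mul_distrib, Finset.prod_pow_eq_pow_sum]
  congr 1
  · by_cases h : y = x + s
    · rw [if_pos h]
      refine Finset.prod_eq_one fun k _ => ?_
      rw [if_pos (by rw [h]; rfl)]
    · rw [if_neg h]
      obtain ⟨k, hk⟩ : ∃ k, y k ≠ x k + s k := by
        by_contra hc
        push_neg at hc
        exact h (funext fun k => hc k)
      exact Finset.prod_eq_zero (Finset.mem_univ k) (if_neg hk)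
  · congr 1
    rw [← chi_sum Finset.univ (fun k => c k * x k)]

lemma Kop_mem_pauliGroup {n : ℕ} {q : QIdx n → ZMod 2}
    (hq : ∃ (a : Fin n → Fin n → ZMod 2) (b : Fin n → ZMod 2) (c : ZMod 2),
      ∀ x, q x = (∑ i, ∑ j, if i < j then a i j * x i * x j else 0)
        + (∑ i, b i * x i) + c) (s : QIdx n) :
    Kop q s ∈ PauliGroup n := by
  obtain ⟨a, b, c, hqf⟩ := hq
  set cv : QIdx n := cvec a s with hcv
  set d : ZMod 2 := q 0 + q s with hd
  set m : ℕ := ∑ k, (s k).val * (cv k).val with hm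
  refine ⟨⟨(2 * d.val + m) % 4, Nat.mod_lt _ (by norm_num)⟩, fun k => sig1 (s k) (cv k), ?_⟩
  ext x y
  rw [Matrix.smul_apply, pauliOp_entry]
  have hphase : (Complex.I : ℂ) ^ ((2 * d.val + m) % 4)
      * ((-Complex.I)^m * (-1:ℂ)^((∑ k, cv k * x k).val))
      = (-1:ℂ)^((∑ k, cv k * x k + d).val) := by
    rw [I_pow_mod, pow_add, pow_mul, Complex.I_sq]
    have : (Complex.I)^m * ((-Complex.I)^m * (-1:ℂ)^((∑ k, cv k * x k).val))
        = (-1:ℂ)^((∑ k, cv k * x k).val) := by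
      rw [← mul_assoc, ← mul_pow]
      simp [Complex.I_mul_I]
    calc (-1:ℂ)^d.val * Complex.I ^ m * ((-Complex.I)^m * (-1:ℂ)^((∑ k, cv k * x k).val))
        = (-1:ℂ)^d.val * ((Complex.I)^m * ((-Complex.I)^m * (-1:ℂ)^((∑ k, cv k * x k).val))) := by
          ring
      _ = (-1:ℂ)^d.val * (-1:ℂ)^((∑ k, cv k * x k).val) := by rw [this]
      _ = (-1:ℂ)^((∑ k, cv k * x k + d).val) := by
          rw [chi_add (∑ k, cv k * x k) d]; ring
  rw [smul_eq_mul, show Complex.I ^ ((⟨(2 * d.val + m) % 4, Nat.mod_lt _ (by norm_num)⟩ :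
      Fin 4) : ℕ) = Complex.I ^ ((2 * d.val + m) % 4) from rfl]
  rw [mul_comm (if y = x + s then (1:ℂ) else 0), ← mul_assoc, hphase]
  simp only [Kop, Matrix.of_apply]
  by_cases h : y = x + s
  · rw [if_pos h, if_pos h, mul_one, h]
    rw [quad_diff a b c q hqf s x]
  · rw [if_neg h, if_neg h, mul_zero]

lemma Kop_mulVec_hstate {n : ℕ} (q : QIdx n → ZMod 2) (s : QIdx n) :
    (Kop q s).mulVec (hstate q) = hstate q := by
  funext x
  simp only [Matrix.mulVec, dotProduct, Kop, Matrix.of_apply, hstate]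
  rw [Finset.sum_eq_single (x + s)]
  · rw [if_pos rfl]
    have : ((-1:ℂ))^((q x + q (x+s)).val)
        * ((Complex.ofReal (Real.sqrt ((2:ℝ)^n)))⁻¹ * (-1:ℂ)^((q (x+s)).val))
        = (Complex.ofReal (Real.sqrt ((2:ℝ)^n)))⁻¹ * (-1:ℂ)^((q x).val) := by
      rw [← mul_assoc, mul_comm _ ((Complex.ofReal (Real.sqrt ((2:ℝ)^n)))⁻¹), mul_assoc,
        chi_cancel]
    rw [this]
  · intro b _ hb
    rw [if_neg hb, zero_mul]
  · simp

lemma hstate_normSq {n : ℕ} (q : QIdx n → ZMod 2) :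
    (∑ x, Complex.normSq (hstate q x)) = 1 := by
  have h2 : (0:ℝ) < (2:ℝ)^n := by positivity
  have : ∀ x : QIdx n, Complex.normSq (hstate q x) = ((2:ℝ)^n)⁻¹ := by
    intro x
    simp only [hstate]
    rw [map_mul, map_pow]
    simp only [Complex.normSq_neg, Complex.normSq_one, one_pow, mul_one]
    rw [map_inv₀, Complex.normSq_ofReal, Real.mul_self_sqrt h2.le]
  rw [Finset.sum_congr rfl fun x _ => this x, Finset.sum_const, Finset.card_univ]
  have hcard : Fintype.card (QIdx n) = 2^n := by
    simp [Fintype.card_fun]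
  rw [hcard, nsmul_eq_mul]
  push_cast
  field_simp

lemma isStabState_hstate {n : ℕ} {q : BF n} (hq : IsQuadratic q) :
    IsStabState (hstate q) := by
  refine ⟨hstate_normSq q, Finset.image (Kop q) Finset.univ, ⟨?_, ?_, ?_, ?_, ?_, ?_⟩, ?_⟩
  · intro M hM
    simp only [Finset.coe_image, Set.mem_image] at hM
    obtain ⟨s, _, rfl⟩ := hM
    exact Kop_mem_pauliGroup hq s
  · exact Finset.mem_image.2 ⟨0, Finset.mem_univ _, Kop_zero q⟩
  · intro A hA B hB
    obtain ⟨s, _, rfl⟩ := Finset.mem_image.1 hA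
    obtain ⟨t, _, rfl⟩ := Finset.mem_image.1 hB
    rw [Kop_mul]
    exact Finset.mem_image.2 ⟨s + t, Finset.mem_univ _, rfl⟩
  · intro A hA B hB
    obtain ⟨s, _, rfl⟩ := Finset.mem_image.1 hA
    obtain ⟨t, _, rfl⟩ := Finset.mem_image.1 hB
    rw [Kop_mul, Kop_mul, add_comm]
  · rw [Finset.card_image_of_injective _ (Kop_injective q), Finset.card_univ]
    simp [Fintype.card_fun]
  · intro hmem
    obtain ⟨s, _, hKs⟩ := Finset.mem_image.1 hmem
    have h0 : Kop q s 0 0 = (-1 : QMat n) 0 0 := by rw [hKs]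
    simp only [Kop, Matrix.of_apply, Matrix.neg_apply, Matrix.one_apply_eq] at h0
    by_cases hs : (0 : QIdx n) = 0 + s
    · rw [if_pos hs] at h0
      have : q 0 + q 0 = 0 := by simp [CharTwo.add_self_eq_zero]
      rw [show q 0 + q (0:QIdx n) = 0 from this] at h0
      norm_num at h0
    · rw [if_neg hs] at h0
      norm_num at h0
  · intro A hA
    obtain ⟨s, _, rfl⟩ := Finset.mem_image.1 hA
    exact Kop_mulVec_hstate q s

/-- Overlap between two hypergraph states. -/
lemma hstate_overlap {n : ℕ} (f g : BF n) :
    (∑ x, (starRingEnd ℂ) (hstate g x) * hstate f x)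
      = 1 - 2 * (wt (fun x => f x + g x) : ℂ) / 2^n := by
  classical
  have h2 : (0:ℝ) < (2:ℝ)^n := by positivity
  have hsum : ∀ x : QIdx n, (starRingEnd ℂ) (hstate g x) * hstate f x
      = ((2:ℂ)^n)⁻¹ * (if f x + g x = 1 then (-1:ℂ) else 1) := by
    intro x
    simp only [hstate, map_mul, map_inv₀, Complex.conj_ofReal, map_pow, map_neg, map_one]
    have : ((-1:ℂ))^((g x).val) * ((-1:ℂ))^((f x).val) = (-1:ℂ)^((f x + g x).val) := by
      rw [chi_add, mul_comm]
    rw [show ((Complex.ofReal (Real.sqrt ((2:ℝ)^n)))⁻¹ * (-1:ℂ)^((g x).val))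
        * ((Complex.ofReal (Real.sqrt ((2:ℝ)^n)))⁻¹ * (-1:ℂ)^((f x).val))
        = ((Complex.ofReal (Real.sqrt ((2:ℝ)^n)))⁻¹ * (Complex.ofReal (Real.sqrt ((2:ℝ)^n)))⁻¹)
          * ((-1:ℂ)^((g x).val) * (-1:ℂ)^((f x).val)) from by ring, this]
    congr 1
    · rw [← mul_inv, ← Complex.ofReal_mul, Real.mul_self_sqrt h2.le]
      push_cast; ring
    · rcases (show ∀ u : ZMod 2, u = 0 ∨ u = 1 from by decide) (f x + g x) with h | h <;> rw [h] <;>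
        norm_num [show ((0:ZMod 2)).val = 0 from rfl, show ((1:ZMod 2)).val = 1 from rfl,
          show (0:ZMod 2) ≠ 1 from by decide]
  rw [Finset.sum_congr rfl fun x _ => hsum x, ← Finset.mul_sum]
  rw [Finset.sum_ite, Finset.sum_const, Finset.sum_const]
  have hcard : Fintype.card (QIdx n) = 2^n := by simp [Fintype.card_fun]
  have hfilt : (Finset.univ.filter fun x : QIdx n => f x + g x = 1).card
      = wt (fun x => f x + g x) := rfl
  have hfilt2 : (Finset.univ.filter fun x : QIdx n => ¬ (f x + g x = 1)).card
      = 2^n - wt (fun x => f x + g x) := by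
    rw [Finset.filter_not, Finset.card_sdiff_of_subset (Finset.filter_subset _ _), Finset.card_univ,
      hcard, hfilt]
  rw [hfilt, hfilt2]
  have hwle : wt (fun x => f x + g x) ≤ 2^n := by
    rw [← hcard, wt]
    exact (Finset.card_filter_le _ _).trans (le_of_eq (Finset.card_univ))
  have : ((2^n - wt (fun x => f x + g x) : ℕ) : ℂ)
      = 2^n - (wt (fun x => f x + g x) : ℂ) := by
    push_cast [Nat.cast_sub hwle]; ring
  rw [nsmul_eq_mul, nsmul_eq_mul, this]
  have h2c : ((2:ℂ)^n) ≠ 0 := by positivity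
  field_simp
  ring


lemma overlap_le_one {n : ℕ} {φ ψ : QVec n}
    (hφ : (∑ x, Complex.normSq (φ x)) = 1) (hψ : (∑ x, Complex.normSq (ψ x)) = 1) :
    ‖∑ x, (starRingEnd ℂ) (φ x) * ψ x‖ ^ 2 ≤ 1 := by
  let Φ : EuclideanSpace ℂ (QIdx n) := WithLp.toLp 2 φ
  let Ψ : EuclideanSpace ℂ (QIdx n) := WithLp.toLp 2 ψ
  have hinner : (inner ℂ Φ Ψ : ℂ) = ∑ x, (starRingEnd ℂ) (φ x) * ψ x := by
    simp only [PiLp.inner_apply, RCLike.inner_apply', Φ, Ψ, WithLp.ofLp_toLp]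
  have hnφ : ‖Φ‖ = 1 := by
    rw [EuclideanSpace.norm_eq]
    have : ∀ x, ‖φ x‖^2 = Complex.normSq (φ x) := fun x => by
      rw [Complex.sq_norm]
    simp only [Φ, WithLp.ofLp_toLp]
    rw [Finset.sum_congr rfl fun x _ => this x, hφ, Real.sqrt_one]
  have hnψ : ‖Ψ‖ = 1 := by
    rw [EuclideanSpace.norm_eq]
    have : ∀ x, ‖ψ x‖^2 = Complex.normSq (ψ x) := fun x => by
      rw [Complex.sq_norm]
    simp only [Ψ, WithLp.ofLp_toLp]
    rw [Finset.sum_congr rfl fun x _ => this x, hψ, Real.sqrt_one]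
  have h := norm_inner_le_norm (𝕜 := ℂ) Φ Ψ
  rw [hinner, hnφ, hnψ, mul_one] at h
  calc ‖∑ x, (starRingEnd ℂ) (φ x) * ψ x‖ ^ 2 ≤ 1^2 :=
        pow_le_pow_left₀ (norm_nonneg _) h 2
    _ = 1 := one_pow 2

end Aux

/-- For a Boolean function `f` with nonquadraticity `χ(f)`,
there is a pure stabilizer state `φ` with
`|⟨φ|Ψ_f⟩|² ≥ (1 − 2^{1−n} χ(f))²`; consequently, if `χ(f) < 2^{n−1}` then
`𝔇_min(Ψ_f) ≤ −2 log₂(1 − 2^{1−n} χ(f))`. -/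
theorem nonquad_overlap_bound (n : ℕ) (hn : 1 ≤ n) (f : BF n) :
    (∃ φ : QVec n, IsStabState φ ∧
      ‖∑ x, (starRingEnd ℂ) (φ x) * hstate f x‖ ^ 2 ≥
        (1 - 2 * (nonquad f : ℝ) / 2 ^ n) ^ 2) ∧
    ((nonquad f : ℝ) < 2 ^ (n - 1) →
      DminPure (hstate f) ≤ -2 * Real.logb 2 (1 - 2 * (nonquad f : ℝ) / 2 ^ n)) := by
  classical
  have hne : { w : ℕ | ∃ q : BF n, IsQuadratic q ∧ w = wt (fun x => f x + q x) }.Nonempty := by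
    refine ⟨wt (fun x => f x + (fun _ => 0) x), fun _ => 0, ⟨fun _ _ => 0, fun _ => 0, 0, ?_⟩, rfl⟩
    intro x; simp
  obtain ⟨q, hq, hwq⟩ := Nat.sInf_mem hne
  have hwq' : nonquad f = wt (fun x => f x + q x) := hwq
  have h2n : (0:ℝ) < 2^n := by positivity
  have hoverlapC : (∑ x, (starRingEnd ℂ) (hstate q x) * hstate f x)
      = ((1 - 2 * ((nonquad f : ℝ)) / 2^n : ℝ) : ℂ) := by
    rw [hstate_overlap f q, ← hwq']
    push_cast
    ring
  have hval : ‖∑ x, (starRingEnd ℂ) (hstate q x) * hstate f x‖^2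
      = (1 - 2 * (nonquad f : ℝ) / 2^n)^2 := by
    rw [hoverlapC, Complex.norm_real, Real.norm_eq_abs, sq_abs]
  constructor
  · exact ⟨hstate q, isStabState_hstate hq, ge_of_eq hval⟩
  · intro hχ
    set r : ℝ := 1 - 2 * (nonquad f : ℝ) / 2^n with hr
    have h1 : n - 1 + 1 = n := Nat.sub_add_cancel hn
    have hpow : (2:ℝ)^n = 2 * 2^(n-1) := by
      calc (2:ℝ)^n = 2^(n-1+1) := by rw [h1]
        _ = 2 * 2^(n-1) := by rw [pow_succ]; ring
    have hrpos : 0 < r := by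
      rw [hr, sub_pos, div_lt_one h2n, hpow]
      linarith
    have hmem : r^2 ∈ stabOverlapSet (hstate f) :=
      ⟨hstate q, isStabState_hstate hq, hval.symm⟩
    have hbdd : BddAbove (stabOverlapSet (hstate f)) := by
      refine ⟨1, fun t ht => ?_⟩
      obtain ⟨φ, hφ, rfl⟩ := ht
      exact overlap_le_one hφ.1 (hstate_normSq f)
    have hle : r^2 ≤ sSup (stabOverlapSet (hstate f)) := le_csSup hbdd hmem
    have hlog : Real.logb 2 (r^2) ≤ Real.logb 2 (sSup (stabOverlapSet (hstate f))) :=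
      Real.logb_le_logb_of_le one_lt_two (by positivity) hle
    rw [Real.logb_pow] at hlog
    rw [DminPure]
    push_cast at hlog
    linarith

end Magic
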